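/- Let u : 2^B → ℝ be a monotone nondecreasing submodular set function with u(∅) = 0 on a finite ground set B. The greedy algorithm that, for k steps, adds the element with maximal marginal gain, produces a set G_k with u(G_k) ≥ (1 − (1 − 1/k)^k) · max_{|S| ≤ k} u(S) ≥ (1 − 1/e) · max_{|S| ≤ k} u(S). -/

import Mathlib

open Real Finset

/-- Greedy maximization of a monotone submodular function: after `k` greedy
steps, the value is at least `(1 - (1 - 1/k)^k) ≥ (1 - 1/e)` times the optimum
over sets of size at most `k`. -/
theorem greedy_submodular_approximation
    {B : Type*} [DecidableEq B] [Fintype B]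
    (u : Finset B → ℝ)
    (hmono : ∀ S T : Finset B, S ⊆ T → u S ≤ u T)
    (hsub : ∀ S T : Finset B, S ⊆ T → ∀ x : B, x ∉ T →
      u (insert x T) - u T ≤ u (insert x S) - u S)
    (hempty : u ∅ = 0)
    (k : ℕ) (hk : 0 < k)
    (G : ℕ → Finset B) (hG0 : G 0 = ∅)
    (hGreedy : ∀ i : ℕ, ∃ x : B, G (i + 1) = insert x (G i) ∧
      ∀ y : B, u (insert y (G i)) ≤ u (insert x (G i))) :
    ∀ S : Finset B, S.card ≤ k →
      (1 - (1 - 1 / (k : ℝ)) ^ k) * u S ≤ u (G k) ∧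
      (1 - Real.exp (-1)) * u S ≤ (1 - (1 - 1 / (k : ℝ)) ^ k) * u S := by
  intro S hS
  have hkR : (1:ℝ) ≤ (k:ℝ) := by exact_mod_cast hk
  have hkpos : (0:ℝ) < (k:ℝ) := by exact_mod_cast hk
  have hq0 : (0:ℝ) ≤ 1 - 1/(k:ℝ) := by
    rw [sub_nonneg, div_le_one hkpos]; exact hkR
  have hSnn : 0 ≤ u S := by rw [← hempty]; exact hmono _ _ (empty_subset S)
  -- marginal sum bound
  have marg : ∀ (D A : Finset B),
      u (A ∪ D) - u A ≤ ∑ x ∈ D, (u (insert x A) - u A) := by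
    intro D
    induction D using Finset.induction with
    | empty => intro A; simp
    | insert x D hx ih =>
      intro A
      rw [Finset.sum_insert hx]
      have h1 : u (A ∪ insert x D) - u (A ∪ D) ≤ u (insert x A) - u A := by
        by_cases hxA : x ∈ A ∪ D
        · have heq : A ∪ insert x D = A ∪ D := by
            rw [Finset.union_insert, Finset.insert_eq_self.2 hxA]
          rw [heq]
          have := hmono A (insert x A) (Finset.subset_insert x A)
          linarith
        · rw [Finset.union_insert]
          exact hsub A (A ∪ D) Finset.subset_union_left x hxA
      have h2 := ih A
      linarith
  -- one greedy step
  have step : ∀ i, u S - u (G (i+1)) ≤ (1 - 1/(k:ℝ)) * (u S - u (G i)) := by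
    intro i
    obtain ⟨x, hGx, hxmax⟩ := hGreedy i
    have hδ : 0 ≤ u (G (i+1)) - u (G i) := by
      have := hmono (G i) (G (i+1)) (by rw [hGx]; exact Finset.subset_insert _ _)
      linarith
    have h1 : u S ≤ u (G i ∪ S) := hmono _ _ Finset.subset_union_right
    have h2 := marg S (G i)
    have h3 : ∑ y ∈ S, (u (insert y (G i)) - u (G i))
        ≤ (S.card : ℝ) * (u (G (i+1)) - u (G i)) := by
      have := Finset.sum_le_card_nsmul S (fun y => u (insert y (G i)) - u (G i))
        (u (G (i+1)) - u (G i)) (by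
          intro y _
          have := hxmax y
          rw [hGx]
          linarith)
      simpa [nsmul_eq_mul] using this
    have hcard : (S.card : ℝ) ≤ (k:ℝ) := by exact_mod_cast hS
    have h4 : (S.card : ℝ) * (u (G (i+1)) - u (G i))
        ≤ (k:ℝ) * (u (G (i+1)) - u (G i)) :=
      mul_le_mul_of_nonneg_right hcard hδ
    have hmain : u S - u (G i) ≤ (k:ℝ) * (u (G (i+1)) - u (G i)) := by linarith
    have h5 : (1/(k:ℝ)) * (u S - u (G i)) ≤ u (G (i+1)) - u (G i) := by
      rw [div_mul_eq_mul_div, div_le_iff₀ hkpos]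
      nlinarith
    nlinarith
  have main : ∀ i, u S - u (G i) ≤ (1 - 1/(k:ℝ))^i * u S := by
    intro i
    induction i with
    | zero => simp [hG0, hempty]
    | succ n ih =>
      calc u S - u (G (n+1)) ≤ (1 - 1/(k:ℝ)) * (u S - u (G n)) := step n
        _ ≤ (1 - 1/(k:ℝ)) * ((1 - 1/(k:ℝ))^n * u S) :=
            mul_le_mul_of_nonneg_left ih hq0
        _ = (1 - 1/(k:ℝ))^(n+1) * u S := by ring
  constructor
  · have := main k
    nlinarith
  · have hk0 : (k:ℝ) ≠ 0 := ne_of_gt hkpos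
    have hexp : (1 - 1/(k:ℝ))^k ≤ Real.exp (-1) := by
      have h1 : (1 - 1/(k:ℝ)) ≤ Real.exp (-(1/(k:ℝ))) := by
        have := Real.add_one_le_exp (-(1/(k:ℝ)))
        linarith
      calc (1 - 1/(k:ℝ))^k ≤ (Real.exp (-(1/(k:ℝ))))^k := pow_le_pow_left₀ hq0 h1 k
        _ = Real.exp (-1) := by
            rw [← Real.exp_nat_mul]
            congr 1
            field_simp
    have hle : (1 - Real.exp (-1)) ≤ 1 - (1 - 1/(k:ℝ))^k := by linarith
    exact mul_le_mul_of_nonneg_right hle hSnn
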